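/- arXiv:1203.1605 — 4 statements merged into one kernel-verified Lean document; each statement's English description precedes it below -/
import Mathlib

section
/- For a Bernoulli variable with parameter p ∈ [0,1], the characteristic-function factor satisfies |(1-p)e^{-2πi p t} + p e^{2πi(1-p)t}| ≤ exp(-c p(1-p) t²) for all t ∈ [-1/2, 1/2], where c > 0 is an absolute constant. -/
open Real

lemma aux_sin_sq_lb {t : ℝ} (ht : |t| ≤ 1 / 2) : 4 * t ^ 2 ≤ Real.sin (π * t) ^ 2 := by
  have hpi := Real.pi_pos
  have key : ∀ s : ℝ, 0 ≤ s → s ≤ 1 / 2 → 4 * s ^ 2 ≤ Real.sin (π * s) ^ 2 := by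
    intro s hs hs'
    have h1 : 2 / π * (π * s) ≤ Real.sin (π * s) :=
      Real.mul_le_sin (by positivity) (by nlinarith)
    have h2 : 2 / π * (π * s) = 2 * s := by field_simp
    rw [h2] at h1
    nlinarith
  rcases le_or_gt 0 t with h | h
  · exact key t h (by rwa [abs_of_nonneg h] at ht)
  · have := key (-t) (by linarith) (by rwa [abs_of_neg h] at ht)
    have hsin : Real.sin (π * (-t)) = - Real.sin (π * t) := by
      rw [mul_neg, Real.sin_neg]
    rw [hsin] at this; nlinarith

/-- `|(1-p)e^{-2πi p t} + p e^{2πi(1-p)t}| ≤ exp(-c p(1-p) t²)` for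
`p ∈ [0,1]`, `|t| ≤ 1/2`, with an absolute constant `c > 0`. -/
theorem bernoulli_char_factor_bound :
    ∃ c : ℝ, 0 < c ∧
      ∀ p : ℝ, p ∈ Set.Icc (0 : ℝ) 1 →
        ∀ t : ℝ, |t| ≤ 1 / 2 →
          ‖((1 - (p : ℂ)) * Complex.exp (-(2 * π * p * t) * Complex.I) +
                (p : ℂ) * Complex.exp ((2 * π * (1 - p) * t) * Complex.I))‖ ≤
            Real.exp (-c * p * (1 - p) * t ^ 2) := by
  refine ⟨8, by norm_num, ?_⟩
  rintro p ⟨hp0, hp1⟩ t ht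
  -- factor out the unimodular part
  have hfac : (1 - (p : ℂ)) * Complex.exp (-(2 * π * p * t) * Complex.I) +
      (p : ℂ) * Complex.exp ((2 * π * (1 - p) * t) * Complex.I) =
      Complex.exp (-(2 * π * p * t) * Complex.I) *
        ((1 - (p : ℂ)) + (p : ℂ) * Complex.exp ((2 * π * t) * Complex.I)) := by
    have he : Complex.exp (-(2 * ↑π * ↑p * ↑t) * Complex.I) *
        Complex.exp ((2 * (π:ℂ) * (t:ℂ)) * Complex.I) =
        Complex.exp ((2 * ↑π * (1 - ↑p) * ↑t) * Complex.I) := by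
      rw [← Complex.exp_add]; congr 1; ring
    rw [← he]; ring
  rw [hfac, norm_mul]
  have habs1 : ‖Complex.exp (-(2 * π * p * t) * Complex.I)‖ = 1 := by
    rw [Complex.norm_exp]
    simp [Complex.mul_I_re]
  rw [habs1, one_mul]
  -- rewrite the remaining complex number in a + b I form
  have hform : (1 - (p : ℂ)) + (p : ℂ) * Complex.exp ((2 * π * t) * Complex.I) =
      ((1 - p + p * Real.cos (2 * π * t) : ℝ) : ℂ) +
        ((p * Real.sin (2 * π * t) : ℝ) : ℂ) * Complex.I := by
    rw [Complex.exp_mul_I, show (2 * (π:ℂ) * (t:ℂ)) = ((2 * π * t : ℝ) : ℂ) by push_cast; ring,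
      ← Complex.ofReal_cos, ← Complex.ofReal_sin]
    push_cast; ring
  rw [hform]
  -- bound the absolute value
  set a : ℝ := 1 - p + p * Real.cos (2 * π * t)
  set b : ℝ := p * Real.sin (2 * π * t)
  have hsq : ‖((a : ℝ) : ℂ) + ((b : ℝ) : ℂ) * Complex.I‖ ^ 2 = a ^ 2 + b ^ 2 := by
    rw [Complex.sq_norm, Complex.normSq_add_mul_I]
  have hval : a ^ 2 + b ^ 2 = 1 - 2 * p * (1 - p) * (1 - Real.cos (2 * π * t)) := by
    have := Real.sin_sq_add_cos_sq (2 * π * t)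
    simp only [a, b]; linear_combination p ^ 2 * this
  have hcos : 1 - Real.cos (2 * π * t) ≥ 8 * t ^ 2 := by
    have hd : Real.cos (2 * π * t) = 1 - 2 * Real.sin (π * t) ^ 2 := by
      rw [show 2 * π * t = 2 * (π * t) by ring, Real.cos_two_mul',
        ← Real.sin_sq_add_cos_sq (π * t)]
      ring
    have := aux_sin_sq_lb ht
    nlinarith
  have hpp : 0 ≤ p * (1 - p) := mul_nonneg hp0 (by linarith)
  have habs2 : ‖((a : ℝ) : ℂ) + ((b : ℝ) : ℂ) * Complex.I‖ ^ 2 ≤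
      Real.exp (-(16 * p * (1 - p) * t ^ 2)) := by
    rw [hsq, hval]
    have hle : 1 - 2 * p * (1 - p) * (1 - Real.cos (2 * π * t)) ≤
        1 - 16 * p * (1 - p) * t ^ 2 := by nlinarith
    refine hle.trans ?_
    have := Real.add_one_le_exp (-(16 * p * (1 - p) * t ^ 2))
    linarith
  have hgoal : Real.exp (-(16 * p * (1 - p) * t ^ 2)) = Real.exp (-8 * p * (1 - p) * t ^ 2) ^ 2 := by
    rw [← Real.exp_nat_mul]; ring_nf
  rw [hgoal] at habs2
  have h1 : 0 ≤ Real.exp (-8 * p * (1 - p) * t ^ 2) := (Real.exp_pos _).le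
  have h2 : 0 ≤ ‖((a : ℝ) : ℂ) + ((b : ℝ) : ℂ) * Complex.I‖ := norm_nonneg _
  nlinarith
end

section
/- For a Bernoulli variable with parameter p ∈ [0,1] and |t| small, the Taylor expansion holds: (1-p)e^{-2πi p t} + p e^{2πi(1-p)t} = exp(-2π² p(1-p) t² + O(p(1-p)|t|³)), where the implied constant is absolute and |t| ≤ 1/10. -/
open Real

set_option maxHeartbeats 1000000 in
lemma bcft_key (p t : ℝ) (hp0 : 0 ≤ p) (hp : p ≤ 1/2) (ht : |t| ≤ 1/10) :
    ∃ E : ℂ, ‖E‖ ≤ 2000 * p * (1 - p) * |t| ^ 3 ∧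
      (1 - (p : ℂ)) * Complex.exp (-(2 * π * p * t) * Complex.I) +
          (p : ℂ) * Complex.exp ((2 * π * (1 - p) * t) * Complex.I) =
        Complex.exp (-(2 * π ^ 2 * p * (1 - p) * t ^ 2 : ℝ) + E) := by
  have hπ : (3.14159 : ℝ) ≤ π := by
    have := Real.pi_gt_d6; linarith
  have hπ' : π ≤ 3.15 := le_of_lt Real.pi_lt_d2
  set θ : ℝ := 2 * π * t with hθdef
  have hθabs : |θ| = 2 * π * |t| := by
    rw [hθdef, abs_mul, abs_of_nonneg (by positivity : (0:ℝ) ≤ 2*π)]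
  have hθ : |θ| ≤ 0.63 := by rw [hθabs]; nlinarith
  have hθ1 : |θ| ≤ 1 := by linarith
  set w : ℂ := p * (Complex.exp (θ * Complex.I) - 1) with hwdef
  have habsθI : ‖(θ:ℂ) * Complex.I‖ = |θ| := by
    simp
  have hw_norm : ‖w‖ ≤ 2 * p * |θ| := by
    rw [hwdef, norm_mul, Complex.norm_real, Real.norm_eq_abs, abs_of_nonneg hp0]
    have := Complex.norm_exp_sub_one_le (x := (θ:ℂ) * Complex.I) (by rw [habsθI]; exact hθ1)
    rw [habsθI] at this
    nlinarith [norm_nonneg (Complex.exp ((θ:ℂ) * Complex.I) - 1)]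
  have hw_small : ‖w‖ ≤ 0.63 := by nlinarith [abs_nonneg θ]
  have hw_lt : ‖w‖ < 1 := by linarith
  have h1w : (1 : ℂ) + w ≠ 0 := by
    intro h
    have hw1 : w = -1 := by linear_combination h
    rw [hw1] at hw_small; simp at hw_small; norm_num at hw_small
  set r : ℂ := Complex.exp ((θ:ℂ) * Complex.I) - 1 - θ * Complex.I + θ^2/2 with hrdef
  have hr_norm : ‖r‖ ≤ 2/9 * |θ|^3 := by
    have hb := Complex.exp_bound (x := (θ:ℂ) * Complex.I) (by rw [habsθI]; exact hθ1) (n := 3) (by norm_num)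
    have hsum : ∑ m ∈ Finset.range 3, ((θ:ℂ)*Complex.I) ^ m / m.factorial
        = 1 + θ * Complex.I - θ^2/2 := by
      rw [Finset.sum_range_succ, Finset.sum_range_succ, Finset.sum_range_succ,
        Finset.sum_range_zero]
      norm_num [Nat.factorial]
      rw [mul_pow, Complex.I_sq]
      ring
    rw [hsum] at hb
    have hre : Complex.exp ((θ:ℂ)*Complex.I) - (1 + θ*Complex.I - θ^2/2) = r := by
      rw [hrdef]; ring
    rw [hre, habsθI] at hb
    calc ‖r‖ ≤ |θ|^3 * (4 * ((6:ℝ) * 3)⁻¹) := by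
          convert hb using 2 <;> norm_num [Nat.factorial]
      _ = 2/9 * |θ|^3 := by ring
  clear_value θ
  refine ⟨Complex.log (1 + w) - (Complex.I * p * θ - p * (1-p) * θ^2 / 2), ?_, ?_⟩
  · -- the bound
    have h1 : ‖Complex.log (1+w) - (w - w^2/2)‖ ≤ 1.9 * p * |θ|^3 := by
      have hlog := Complex.norm_log_sub_logTaylor_le 2 hw_lt
      have hlt : Complex.logTaylor 3 w = w - w^2/2 := by
        simp [Complex.logTaylor_succ, Complex.logTaylor_zero]; ring
      rw [hlt] at hlog
      norm_num at hlog
      calc ‖Complex.log (1+w) - (w - w^2/2)‖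
          ≤ ‖w‖ ^ 3 * (1 - ‖w‖)⁻¹ / 3 := hlog
        _ ≤ (2*p*|θ|)^3 * (0.37)⁻¹ / 3 := by
            have hA : ‖w‖ ^ 3 ≤ (2*p*|θ|)^3 :=
              pow_le_pow_left₀ (norm_nonneg w) hw_norm 3
            have hB : (1 - ‖w‖)⁻¹ ≤ (0.37)⁻¹ := by
              apply inv_anti₀ (by norm_num)
              linarith
            have hm := mul_le_mul hA hB (inv_nonneg.mpr (by linarith)) (by positivity)
            linarith
        _ ≤ 1.9 * p * |θ|^3 := by
            have h8 : (2*p*|θ|)^3 = 8 * (p*p) * p * |θ|^3 := by ring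
            rw [h8]
            have hp2 : p*p ≤ 1/4 := by nlinarith
            nlinarith [pow_nonneg (abs_nonneg θ) 3, mul_nonneg hp0 (pow_nonneg (abs_nonneg θ) 3)]
    have hD : w - w^2/2 - (Complex.I * p * θ - p * (1-p) * θ^2 / 2)
        = p * r - p^2/2 * ((r - θ^2/2) * (r + 2*θ*Complex.I - θ^2/2)) := by
      have hw' : w = p * ((θ:ℂ)*Complex.I - θ^2/2 + r) := by
        rw [hwdef, hrdef]; ring
      have hI : Complex.I^2 = -1 := Complex.I_sq
      rw [hw']
      linear_combination (-(p:ℂ)^2 * (θ:ℂ)^2/2) * hI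
    have ha : ‖r - θ^2/2‖ ≤ 0.64 * |θ|^2 := by
      have e2 : ‖(θ:ℂ)^2/2‖ = |θ|^2/2 := by
        rw [norm_div, norm_pow, Complex.norm_real]; simp [sq_abs]
      calc ‖r - θ^2/2‖ ≤ ‖r‖ + ‖(θ:ℂ)^2/2‖ :=
            norm_sub_le r ((θ:ℂ)^2/2)
        _ ≤ 2/9*|θ|^3 + |θ|^2/2 := by rw [e2]; linarith
        _ ≤ 0.64 * |θ|^2 := by nlinarith [abs_nonneg θ, sq_nonneg θ, sq_abs θ]
    have hb : ‖r + 2*θ*Complex.I - θ^2/2‖ ≤ 2.41 * |θ| := by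
      have e1 : ‖2*(θ:ℂ)*Complex.I‖ = 2*|θ| := by
        simp
      have e2 : ‖(θ:ℂ)^2/2‖ = |θ|^2/2 := by
        rw [norm_div, norm_pow, Complex.norm_real]; simp [sq_abs]
      calc ‖r + 2*θ*Complex.I - θ^2/2‖
          ≤ ‖r + 2*θ*Complex.I‖ + ‖(θ:ℂ)^2/2‖ :=
            norm_sub_le _ _
        _ ≤ ‖r‖ + ‖2*(θ:ℂ)*Complex.I‖ + ‖(θ:ℂ)^2/2‖ := by
            have := norm_add_le r (2*(θ:ℂ)*Complex.I); linarith
        _ ≤ 2/9*|θ|^3 + 2*|θ| + |θ|^2/2 := by rw [e1, e2]; linarith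
        _ ≤ 2.41 * |θ| := by nlinarith [abs_nonneg θ, sq_nonneg θ]
    have h2 : ‖w - w^2/2 - (Complex.I * p * θ - p * (1-p) * θ^2 / 2)‖
        ≤ 1.1 * p * |θ|^3 := by
      rw [hD]
      calc ‖(p:ℂ) * r - p^2/2 * ((r - θ^2/2) * (r + 2*θ*Complex.I - θ^2/2))‖
          ≤ ‖(p:ℂ) * r‖
            + ‖(p:ℂ)^2/2 * ((r - θ^2/2) * (r + 2*θ*Complex.I - θ^2/2))‖ :=
            norm_sub_le _ _
        _ ≤ p * (2/9*|θ|^3) + p^2/2 * (0.64*|θ|^2 * (2.41*|θ|)) := by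
            gcongr ?_ + ?_
            · rw [norm_mul, Complex.norm_real, Real.norm_eq_abs, abs_of_nonneg hp0]
              gcongr
            · rw [norm_mul, norm_mul, norm_div, norm_pow, Complex.norm_real, Real.norm_eq_abs, abs_of_nonneg hp0]
              simp only [Complex.norm_ofNat]
              gcongr
        _ ≤ 1.1 * p * |θ|^3 := by
            nlinarith [abs_nonneg θ, pow_nonneg (abs_nonneg θ) 3, mul_nonneg hp0 (pow_nonneg (abs_nonneg θ) 3), mul_nonneg (mul_nonneg (by linarith : (0:ℝ) ≤ 1/2 - p) hp0) (pow_nonneg (abs_nonneg θ) 3)]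
    have hE : ‖Complex.log (1 + w) - (Complex.I * p * θ - p * (1-p) * θ^2 / 2)‖
        ≤ 3 * p * |θ|^3 := by
      have hsplit : Complex.log (1 + w) - (Complex.I * p * θ - p * (1-p) * θ^2 / 2)
          = (Complex.log (1+w) - (w - w^2/2))
            + (w - w^2/2 - (Complex.I * p * θ - p * (1-p) * θ^2 / 2)) := by ring
      rw [hsplit]
      calc ‖_‖ ≤ _ := norm_add_le _ _
        _ ≤ 3 * p * |θ|^3 := by linarith
    have hθ3 : |θ|^3 = 8 * π^3 * |t|^3 := by rw [hθabs]; ring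
    have hq : (1:ℝ)/2 ≤ 1 - p := by linarith
    calc ‖_‖ ≤ 3 * p * |θ|^3 := hE
      _ = 3 * 8 * π^3 * p * |t|^3 := by rw [hθ3]; ring
      _ ≤ 2000 * p * (1-p) * |t|^3 := by
          have hπ3 : π^3 ≤ 32 := by nlinarith [pi_pos, sq_nonneg (π - 3.15)]
          have h3 : 0 ≤ p * |t|^3 := mul_nonneg hp0 (pow_nonneg (abs_nonneg t) 3)
          have hm1 := mul_le_mul_of_nonneg_left hq h3
          have hm2 := mul_le_mul_of_nonneg_right hπ3 h3
          nlinarith [pi_pos]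
  · -- the equation
    have hexp : (-(2 * π ^ 2 * p * (1 - p) * t ^ 2 : ℝ) : ℂ)
          + (Complex.log (1 + w) - (Complex.I * p * θ - p * (1-p) * θ^2 / 2))
        = Complex.log (1 + w) + (-(Complex.I * p * θ)) := by
      have hc : ((2 * π ^ 2 * p * (1 - p) * t ^ 2 : ℝ) : ℂ) = p * (1-p) * θ^2/2 := by
        rw [hθdef]; push_cast; ring
      rw [hc]; push_cast; ring
    rw [hexp, Complex.exp_add, Complex.exp_log h1w, hwdef]
    have hsplit : (1 + (p:ℂ) * (Complex.exp ((θ:ℂ) * Complex.I) - 1)) * Complex.exp (-(Complex.I * p * θ))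
        = (1 - p) * Complex.exp (-(Complex.I * p * θ))
          + p * (Complex.exp ((θ:ℂ) * Complex.I) * Complex.exp (-(Complex.I * p * θ))) := by
      ring
    rw [hsplit, ← Complex.exp_add]
    have hθc : (θ:ℂ) = 2 * π * t := by rw [hθdef]; push_cast; ring
    have e1 : -(2 * (π:ℂ) * p * t) * Complex.I = -(Complex.I * (p:ℂ) * θ) := by
      rw [hθc]; ring
    have e2 : 2 * (π:ℂ) * (1 - p) * t * Complex.I = (θ:ℂ) * Complex.I + -(Complex.I * (p:ℂ) * θ) := by
      rw [hθc]; ring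
    rw [e1, e2]

/-- Taylor expansion
`(1-p)e^{-2πi p t} + p e^{2πi(1-p)t} = exp(-2π² p(1-p) t² + O(p(1-p)|t|³))`
for `p ∈ [0,1]` and `|t| ≤ 1/10`, with an absolute implied constant. -/
theorem bernoulli_char_factor_taylor :
    ∃ C : ℝ, 0 < C ∧
      ∀ p : ℝ, p ∈ Set.Icc (0 : ℝ) 1 →
        ∀ t : ℝ, |t| ≤ 1 / 10 →
          ∃ E : ℂ, ‖E‖ ≤ C * p * (1 - p) * |t| ^ 3 ∧
            (1 - (p : ℂ)) * Complex.exp (-(2 * π * p * t) * Complex.I) +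
                (p : ℂ) * Complex.exp ((2 * π * (1 - p) * t) * Complex.I) =
              Complex.exp (-(2 * π ^ 2 * p * (1 - p) * t ^ 2 : ℝ) + E) := by
  refine ⟨2000, by norm_num, fun p hp t ht => ?_⟩
  obtain ⟨hp0, hp1⟩ := hp
  by_cases hc : p ≤ 1/2
  · exact bcft_key p t hp0 hc ht
  · obtain ⟨E, hE1, hE2⟩ := bcft_key (1-p) (-t) (by linarith) (by linarith)
      (by rwa [abs_neg])
    refine ⟨E, ?_, ?_⟩
    · rw [abs_neg] at hE1
      calc ‖E‖ ≤ 2000 * (1-p) * (1-(1-p)) * |t|^3 := hE1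
        _ = 2000 * p * (1-p) * |t|^3 := by ring
    · push_cast at hE2 ⊢
      ring_nf at hE2 ⊢
      convert hE2 using 3 <;> ring_nf
end

section
/- With V, P, J as above (no nonzero element of V supported in J), the operator Q := 1_{Jᶜ} P (P 1_{Jᶜ} P)_V^{-1} P 1_{Jᶜ} is self-adjoint, idempotent, and has range equal to 1_{Jᶜ} V; hence Q is the orthogonal projection onto the subspace 1_{Jᶜ} V. -/
open MeasureTheory

/-- Multiplication by the indicator function of a measurable set `J`, as a continuous
linear operator on `L²(ℝ)`. -/
noncomputable def indicatorCLM (J : Set ℝ) (hJ : MeasurableSet J) :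
    Lp ℂ 2 (volume : Measure ℝ) →L[ℂ] Lp ℂ 2 (volume : Measure ℝ) :=
  LinearMap.mkContinuous
    { toFun := fun f => MemLp.toLp (J.indicator ⇑f) ((Lp.memLp f).indicator hJ)
      map_add' := fun f g => by
        apply Lp.ext
        filter_upwards [MemLp.coeFn_toLp (μ := volume) (p := 2) (E := ℂ) ((Lp.memLp (f + g)).indicator hJ),
          MemLp.coeFn_toLp (μ := volume) (p := 2) (E := ℂ) ((Lp.memLp f).indicator hJ),
          MemLp.coeFn_toLp (μ := volume) (p := 2) (E := ℂ) ((Lp.memLp g).indicator hJ),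
          Lp.coeFn_add f g,
          Lp.coeFn_add (MemLp.toLp (J.indicator ⇑f) ((Lp.memLp f).indicator hJ))
            (MemLp.toLp (J.indicator ⇑g) ((Lp.memLp g).indicator hJ))] with x h1 h2 h3 h4 h5
        rw [h1, h5, Pi.add_apply, h2, h3]
        by_cases hx : x ∈ J
        · rw [Set.indicator_of_mem hx, Set.indicator_of_mem hx, Set.indicator_of_mem hx, h4]
          rfl
        · rw [Set.indicator_of_notMem hx, Set.indicator_of_notMem hx,
            Set.indicator_of_notMem hx]
          simp
      map_smul' := fun c f => by
        apply Lp.ext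
        filter_upwards [MemLp.coeFn_toLp (μ := volume) (p := 2) (E := ℂ) ((Lp.memLp (c • f)).indicator hJ),
          MemLp.coeFn_toLp (μ := volume) (p := 2) (E := ℂ) ((Lp.memLp f).indicator hJ),
          Lp.coeFn_smul c f,
          Lp.coeFn_smul c (MemLp.toLp (J.indicator ⇑f) ((Lp.memLp f).indicator hJ))] with x h1 h2 h3 h4
        simp only [RingHom.id_apply]
        rw [h1, h4, Pi.smul_apply, h2]
        by_cases hx : x ∈ J
        · rw [Set.indicator_of_mem hx, Set.indicator_of_mem hx, h3]
          rfl
        · rw [Set.indicator_of_notMem hx, Set.indicator_of_notMem hx]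
          simp
      }
    1 (fun f => by
      rw [one_mul]
      show ‖MemLp.toLp (μ := volume) (p := 2) (E := ℂ) (J.indicator ⇑f) ((Lp.memLp f).indicator hJ)‖ ≤ ‖f‖
      rw [Lp.norm_toLp, Lp.norm_def]
      exact ENNReal.toReal_mono (Lp.eLpNorm_ne_top f) (eLpNorm_indicator_le _))

lemma indicatorCLM_coe (J : Set ℝ) (hJ : MeasurableSet J) (f : Lp ℂ 2 (volume : Measure ℝ)) :
    (indicatorCLM J hJ f : ℝ → ℂ) =ᵐ[volume] J.indicator ⇑f := by
  have h : indicatorCLM J hJ f =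
      MemLp.toLp (μ := volume) (p := 2) (E := ℂ) (J.indicator ⇑f) ((Lp.memLp f).indicator hJ) := rfl
  rw [h]
  exact MemLp.coeFn_toLp (μ := volume) (p := 2) (E := ℂ) ((Lp.memLp f).indicator hJ)

lemma indicatorCLM_idem (J : Set ℝ) (hJ : MeasurableSet J) :
    indicatorCLM J hJ * indicatorCLM J hJ = indicatorCLM J hJ := by
  ext f
  filter_upwards [indicatorCLM_coe J hJ f, indicatorCLM_coe J hJ (indicatorCLM J hJ f),
    (indicatorCLM_coe J hJ f).indicator (s := J)] with x h1 h2 h3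
  rw [ContinuousLinearMap.mul_apply, h2, h3, Set.indicator_indicator, Set.inter_self, h1]

lemma indicatorCLM_sa (J : Set ℝ) (hJ : MeasurableSet J) :
    IsSelfAdjoint (indicatorCLM J hJ) := by
  rw [ContinuousLinearMap.isSelfAdjoint_iff_isSymmetric]
  intro f g
  rw [L2.inner_def, L2.inner_def]
  apply integral_congr_ae
  filter_upwards [indicatorCLM_coe J hJ f, indicatorCLM_coe J hJ g] with x h1 h2
  simp only [ContinuousLinearMap.coe_coe]
  rw [RCLike.inner_apply, RCLike.inner_apply, h1, h2]
  by_cases hx : x ∈ J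
  · simp [Set.indicator_of_mem hx]
  · simp [Set.indicator_of_notMem hx]

set_option maxHeartbeats 1000000 in
/-- with `V`, `P`, `J` as above (no nonzero element of `V` supported in `J`),
and `B` the inverse of the restriction of `P 1_{Jᶜ} P` to `V`, extended by `0` on `Vᗮ`,
the operator `Q := 1_{Jᶜ} P B P 1_{Jᶜ}` is self-adjoint, idempotent, and has range
`1_{Jᶜ} V`; i.e. `Q` is the orthogonal projection onto `1_{Jᶜ} V`. -/
theorem conditioned_projection_formula
    (V : Submodule ℂ (Lp ℂ 2 (volume : Measure ℝ))) [FiniteDimensional ℂ V]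
    (P : Lp ℂ 2 (volume : Measure ℝ) →L[ℂ] Lp ℂ 2 (volume : Measure ℝ))
    (hPsa : IsSelfAdjoint P) (hPidem : P * P = P)
    (hPrange : LinearMap.range (P : Lp ℂ 2 (volume : Measure ℝ) →ₗ[ℂ] Lp ℂ 2 volume) = V)
    (J : Set ℝ) (hJ : MeasurableSet J)
    (hsupp : ∀ f : Lp ℂ 2 (volume : Measure ℝ), f ∈ V →
      indicatorCLM Jᶜ hJ.compl f = 0 → f = 0)
    (B : Lp ℂ 2 (volume : Measure ℝ) →L[ℂ] Lp ℂ 2 (volume : Measure ℝ))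
    (hBrange : ∀ w, B w ∈ V)
    (hBperp : ∀ w ∈ Vᗮ, B w = 0)
    (hBinv₁ : ∀ v ∈ V, B ((P * indicatorCLM Jᶜ hJ.compl * P) v) = v)
    (hBinv₂ : ∀ v ∈ V, (P * indicatorCLM Jᶜ hJ.compl * P) (B v) = v) :
    IsSelfAdjoint (indicatorCLM Jᶜ hJ.compl * P * B * P * indicatorCLM Jᶜ hJ.compl) ∧
      (indicatorCLM Jᶜ hJ.compl * P * B * P * indicatorCLM Jᶜ hJ.compl) *
          (indicatorCLM Jᶜ hJ.compl * P * B * P * indicatorCLM Jᶜ hJ.compl) =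
        indicatorCLM Jᶜ hJ.compl * P * B * P * indicatorCLM Jᶜ hJ.compl ∧
      LinearMap.range
          (indicatorCLM Jᶜ hJ.compl * P * B * P * indicatorCLM Jᶜ hJ.compl :
            Lp ℂ 2 (volume : Measure ℝ) →L[ℂ] Lp ℂ 2 volume).toLinearMap =
        V.map (indicatorCLM Jᶜ hJ.compl).toLinearMap := by
  set E := indicatorCLM Jᶜ hJ.compl with hEdef
  have hE : IsSelfAdjoint E := indicatorCLM_sa _ _
  have hEE : E * E = E := indicatorCLM_idem _ _
  have hPmem : ∀ w, P w ∈ V := by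
    intro w; rw [← hPrange]; exact ⟨w, rfl⟩
  have hPfix : ∀ v ∈ V, P v = v := by
    intro v hv
    rw [← hPrange] at hv
    obtain ⟨x, rfl⟩ := hv
    have := congrFun (congrArg (fun T => (T : _ →L[ℂ] _).toFun) hPidem) x
    simpa using this
  have hPB : P * B = B := by
    refine ContinuousLinearMap.ext fun w => ?_
    exact hPfix _ (hBrange w)
  have hBP : B * P = B := by
    refine ContinuousLinearMap.ext fun w => ?_
    have hmem : w - P w ∈ Vᗮ := by
      rw [Submodule.mem_orthogonal]
      intro u hu
      have h1 : (inner ℂ u (P w) : ℂ) = inner ℂ (P u) w := by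
        conv_rhs => rw [← hPsa.adjoint_eq]
        exact (ContinuousLinearMap.adjoint_inner_left P w u).symm
      rw [inner_sub_right, h1, hPfix u hu, sub_self]
    have h0 : B (w - P w) = 0 := hBperp _ hmem
    have : B w - B (P w) = 0 := by rw [← map_sub]; exact h0
    exact (sub_eq_zero.mp this).symm
  set A := P * E * P with hAdef
  have hAsa : star A = A := by
    rw [hAdef, star_mul, star_mul, hE.star_eq, hPsa.star_eq, mul_assoc]
  have hAP : A * P = A := by
    rw [hAdef, mul_assoc, hPidem]
  have hAB : A * B = P := by
    refine ContinuousLinearMap.ext fun w => ?_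
    have : A (B w) = A (B (P w)) := by
      conv_lhs => rw [← hBP]
      rfl
    rw [ContinuousLinearMap.mul_apply, this, hBinv₂ _ (hPmem w)]
  have hBA : B * A = P := by
    refine ContinuousLinearMap.ext fun w => ?_
    have : B (A w) = B (A (P w)) := by
      conv_lhs => rw [← hAP]
      rfl
    rw [ContinuousLinearMap.mul_apply, this, hBinv₁ _ (hPmem w)]
  have hBsa : star B = B := by
    have h1 : star B = star B * P := by
      conv_lhs => rw [← hPB, star_mul, hPsa.star_eq]
    have h2 : star B * A = P := by
      have := congrArg star hAB
      rwa [star_mul, hAsa, hPsa.star_eq] at this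
    rw [h1, ← hAB, ← mul_assoc, h2, hPB]
  -- element-level formulas
  set Q := E * P * B * P * E with hQdef
  have hq : ∀ w, Q w = E (B (P (E w))) := by
    intro w
    simp only [hQdef, ContinuousLinearMap.mul_apply]
    rw [hPfix _ (hBrange _)]
  have hQE : ∀ v ∈ V, Q (E v) = E v := by
    intro v hv
    have hEEv : E (E v) = E v := by
      have := congrFun (congrArg (fun T => (T : _ →L[ℂ] _).toFun) hEE) v
      simpa using this
    have hPEv : P (E v) = A v := by
      rw [hAdef]
      simp only [ContinuousLinearMap.mul_apply]
      rw [hPfix v hv]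
    rw [hq, hEEv, hPEv, hBinv₁ v hv]
  refine ⟨?_, ?_, ?_⟩
  · show star Q = Q
    rw [hQdef]
    simp only [star_mul, hE.star_eq, hPsa.star_eq, hBsa]
    simp only [mul_assoc]
  · refine ContinuousLinearMap.ext fun w => ?_
    rw [ContinuousLinearMap.mul_apply, hq w, hQE _ (hBrange _)]
  · ext y
    simp only [LinearMap.mem_range, Submodule.mem_map, ContinuousLinearMap.coe_coe]
    constructor
    · rintro ⟨w, rfl⟩
      exact ⟨B (P (E w)), hBrange _, (hq w).symm⟩
    · rintro ⟨v, hv, rfl⟩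
      exact ⟨E v, hQE v hv⟩
end

section
/- Suppose P_n, P are orthogonal projections on L²(ℝ) with continuous kernels K_n, K such that K_n → K locally uniformly and K_n(y,y) → K(y,y) uniformly for y in a compact interval J, and suppose ∫_ℝ |K(x,y)|² dx = K(y,y) and ∫_ℝ |K_n(x,y)|² dx = K_n(y,y) for all y. Then ∫_ℝ |K(x,y) - K_n(x,y)|² dx → 0 uniformly for y ∈ J. -/
open MeasureTheory Filter

set_option maxHeartbeats 1000000

/-- if `Kn`, `K` are continuous kernels of orthogonal projections on
`L²(ℝ)` with `Kn → K` locally uniformly, `Kn(y,y) → K(y,y)` uniformly on a compact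
interval `J = [a,b]`, the rows satisfy `∫ |K(x,y)|² dx = K(y,y)` (and similarly for `Kn`),
and the tails of `∫ |K(x,y)|² dx` are uniformly small for `y ∈ J`, then
`∫ |K(x,y) - Kn(x,y)|² dx → 0` uniformly for `y ∈ J`. -/
theorem rows_converge_L2
    (K : ℝ → ℝ → ℂ) (Kn : ℕ → ℝ → ℝ → ℂ) (a b : ℝ)
    (hKcont : Continuous fun p : ℝ × ℝ => K p.1 p.2)
    (hKncont : ∀ n, Continuous fun p : ℝ × ℝ => Kn n p.1 p.2)
    (hconv : ∀ S : Set (ℝ × ℝ), IsCompact S →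
      TendstoUniformlyOn (fun n p => Kn n p.1 p.2) (fun p => K p.1 p.2) atTop S)
    (hdiag : TendstoUniformlyOn (fun n y => Kn n y y) (fun y => K y y) atTop (Set.Icc a b))
    (hrowint : ∀ y : ℝ, Integrable (fun x => ‖K x y‖ ^ 2) (volume : Measure ℝ))
    (hrownint : ∀ n, ∀ y : ℝ, Integrable (fun x => ‖Kn n x y‖ ^ 2) (volume : Measure ℝ))
    (hrow : ∀ y : ℝ, (∫ x : ℝ, ‖K x y‖ ^ 2) = (K y y).re)
    (hrown : ∀ n, ∀ y : ℝ, (∫ x : ℝ, ‖Kn n x y‖ ^ 2) = (Kn n y y).re)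
    (htail : ∀ ε > (0 : ℝ), ∃ L > (0 : ℝ), ∀ y ∈ Set.Icc a b,
      (∫ x in {x : ℝ | L < |x|}, ‖K x y‖ ^ 2) < ε) :
    ∀ ε > (0 : ℝ), ∃ N : ℕ, ∀ n ≥ N, ∀ y ∈ Set.Icc a b,
      (∫ x : ℝ, ‖K x y - Kn n x y‖ ^ 2) < ε := by
  intro ε hε
  obtain ⟨L, hL, hLtail⟩ := htail (ε/8) (by linarith)
  set s : Set ℝ := {x : ℝ | L < |x|} with hs_def
  have hs_meas : MeasurableSet s := (isOpen_lt continuous_const continuous_abs).measurableSet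
  have hsc : sᶜ = Set.Icc (-L) L := by
    ext x; simp [hs_def, Set.mem_Icc, not_lt, abs_le]
  have hvolfin : volume sᶜ < ⊤ := by rw [hsc]; exact measure_Icc_lt_top
  have hvol : (volume sᶜ).toReal = 2*L := by
    rw [hsc, Real.volume_Icc, ENNReal.toReal_ofReal (by linarith)]; ring
  have hScomp : IsCompact ((Set.Icc (-L) L) ×ˢ (Set.Icc a b)) :=
    isCompact_Icc.prod isCompact_Icc
  obtain ⟨M0, hM0⟩ := hScomp.exists_bound_of_continuousOn hKcont.continuousOn
  set M : ℝ := max M0 0 with hM_def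
  have hM : ∀ p ∈ (Set.Icc (-L) L) ×ˢ (Set.Icc a b), ‖K p.1 p.2‖ ≤ M :=
    fun p hp => (hM0 p hp).trans (le_max_left _ _)
  have hMnn : 0 ≤ M := le_max_right _ _
  set δ : ℝ := min 1 (ε / (4*(L*(8*M+6)+1))) with hδ_def
  have hden : 0 < 4*(L*(8*M+6)+1) := by nlinarith
  have hδpos : 0 < δ := lt_min one_pos (div_pos hε hden)
  have hδ1 : δ ≤ 1 := min_le_left _ _
  have hδε : δ * (L*(8*M+6)) < ε/4 := by
    have h1 : δ ≤ ε / (4*(L*(8*M+6)+1)) := min_le_right _ _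
    have h2 : δ * (4*(L*(8*M+6)+1)) ≤ ε := (le_div_iff₀ hden).mp h1
    nlinarith
  have h1 := (Metric.tendstoUniformlyOn_iff.mp (hconv _ hScomp)) δ hδpos
  have h2 := (Metric.tendstoUniformlyOn_iff.mp hdiag) (ε/16) (by linarith)
  obtain ⟨N1, hN1⟩ := Filter.eventually_atTop.mp h1
  obtain ⟨N2, hN2⟩ := Filter.eventually_atTop.mp h2
  refine ⟨max N1 N2, fun n hn y hy => ?_⟩
  have hnear : ∀ x ∈ Set.Icc (-L) L, ‖K x y - Kn n x y‖ ≤ δ := fun x hx => by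
    have := hN1 n (le_trans (le_max_left _ _) hn) (x, y) (Set.mk_mem_prod hx hy)
    rw [dist_eq_norm] at this; exact this.le
  have hdiagnear : |(K y y).re - (Kn n y y).re| < ε/16 := by
    have h := hN2 n (le_trans (le_max_right _ _) hn) y hy
    rw [dist_eq_norm] at h
    have h3 : |(K y y - Kn n y y).re| ≤ ‖K y y - Kn n y y‖ := by
      exact Complex.abs_re_le_norm _
    rw [Complex.sub_re] at h3
    linarith [h3.trans_lt h]
  have hKy : Continuous fun x => K x y := hKcont.comp (continuous_id.prodMk continuous_const)
  have hKny : Continuous fun x => Kn n x y :=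
    (hKncont n).comp (continuous_id.prodMk continuous_const)
  have hf := hrowint y
  have hg := hrownint n y
  have hh_int : Integrable (fun x => ‖K x y - Kn n x y‖^2) volume := by
    refine Integrable.mono' ((hf.const_mul 2).add (hg.const_mul 2)) ?_ ?_
    · exact ((hKy.sub hKny).norm.pow 2).aestronglyMeasurable
    · filter_upwards with x
      have h1 := norm_sub_le (K x y) (Kn n x y)
      have h2 := norm_nonneg (K x y); have h3 := norm_nonneg (Kn n x y)
      rw [Real.norm_eq_abs, abs_of_nonneg (by positivity)]
      simp only [Pi.add_apply]
      nlinarith [mul_self_le_mul_self (norm_nonneg (K x y - Kn n x y)) h1,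
        sq_nonneg (‖K x y‖ - ‖Kn n x y‖)]
  -- splitting identities
  have hsplit_h := integral_add_compl hs_meas hh_int
  have hsplit_f := integral_add_compl hs_meas hf
  have hsplit_g := integral_add_compl hs_meas hg
  rw [hrow y] at hsplit_f
  rw [hrown n y] at hsplit_g
  -- tail of f small
  have htailf : (∫ x in s, ‖K x y‖^2) < ε/8 := hLtail y hy
  -- constant integrable on sᶜ
  have hconst_int : ∀ c : ℝ, IntegrableOn (fun _ => c) sᶜ volume := fun c =>
    integrableOn_const hvolfin.ne
  -- bound on the compact part of h
  have hA : (∫ x in sᶜ, ‖K x y - Kn n x y‖^2) ≤ 2*L * δ^2 := by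
    have step : (∫ x in sᶜ, ‖K x y - Kn n x y‖^2) ≤ ∫ x in sᶜ, δ^2 := by
      refine setIntegral_mono_on hh_int.integrableOn (hconst_int _) hs_meas.compl fun x hx => ?_
      rw [hsc] at hx
      exact pow_le_pow_left₀ (norm_nonneg _) (hnear x hx) 2
    rw [setIntegral_const, measureReal_def, hvol] at step
    simpa [smul_eq_mul] using step
  -- compare f and g on compact part
  have hfg : (∫ x in sᶜ, ‖K x y‖^2) - (∫ x in sᶜ, ‖Kn n x y‖^2) ≤ 2*L * (δ*(2*M+δ)) := by
    have step : (∫ x in sᶜ, (‖K x y‖^2 - ‖Kn n x y‖^2)) ≤ ∫ x in sᶜ, δ*(2*M+δ) := by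
      refine setIntegral_mono_on (hf.integrableOn.sub hg.integrableOn) (hconst_int _)
        hs_meas.compl fun x hx => ?_
      rw [hsc] at hx
      have hu : ‖K x y‖ ≤ M := hM (x, y) (Set.mk_mem_prod hx hy)
      have huv : ‖K x y‖ ≤ ‖Kn n x y‖ + δ := by
        have := norm_sub_norm_le (K x y) (Kn n x y)
        linarith [hnear x hx]
      have hv : (0:ℝ) ≤ ‖Kn n x y‖ := norm_nonneg _
      have hu0 : (0:ℝ) ≤ ‖K x y‖ := norm_nonneg _
      nlinarith [sq_nonneg (‖K x y‖ - ‖Kn n x y‖), mul_nonneg hδpos.le hv,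
        mul_nonneg hδpos.le hu0]
    rw [setIntegral_const, measureReal_def, hvol] at step
    rw [integral_sub hf.integrableOn hg.integrableOn] at step
    simpa [smul_eq_mul] using step
  -- tail of h bounded by tails of f and g
  have hB : (∫ x in s, ‖K x y - Kn n x y‖^2) ≤
      2 * (∫ x in s, ‖K x y‖^2) + 2 * (∫ x in s, ‖Kn n x y‖^2) := by
    have step : (∫ x in s, ‖K x y - Kn n x y‖^2) ≤
        ∫ x in s, (2 * ‖K x y‖^2 + 2 * ‖Kn n x y‖^2) := by
      refine setIntegral_mono_on hh_int.integrableOn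
        ((hf.const_mul 2).add (hg.const_mul 2)).integrableOn hs_meas fun x hx => ?_
      have h1 := norm_sub_le (K x y) (Kn n x y)
      nlinarith [mul_self_le_mul_self (norm_nonneg (K x y - Kn n x y)) h1,
        sq_nonneg (‖K x y‖ - ‖Kn n x y‖)]
    rw [integral_add ((hf.const_mul 2).integrableOn) ((hg.const_mul 2).integrableOn),
      integral_const_mul, integral_const_mul] at step
    exact step
  -- nonnegativity
  have hnn1 : (0:ℝ) ≤ ∫ x in s, ‖K x y - Kn n x y‖^2 :=
    setIntegral_nonneg hs_meas fun x _ => by positivity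
  have hnn2 : (0:ℝ) ≤ ∫ x in sᶜ, ‖K x y - Kn n x y‖^2 :=
    setIntegral_nonneg hs_meas.compl fun x _ => by positivity
  have hnn3 : (0:ℝ) ≤ ∫ x in s, ‖Kn n x y‖^2 :=
    setIntegral_nonneg hs_meas fun x _ => by positivity
  -- assemble
  have habs := abs_lt.mp hdiagnear
  have hδsq : δ^2 ≤ δ := by rw [sq]; exact mul_le_of_le_one_left hδpos.le hδ1
  have hkey : 2*L*δ^2 + 4*L*(δ*(2*M+δ)) < 3*ε/8 := by
    nlinarith [mul_le_mul_of_nonneg_left hδsq hL.le, hδε,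
      mul_nonneg hL.le (mul_nonneg hMnn hδpos.le)]
  linarith [hsplit_h, hA, hB, hsplit_f, hsplit_g, htailf, hfg, habs.1, habs.2, hkey]
end
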